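/- Let (X,d,μ) be a space of homogeneous type with open balls and E ⊆ X non-empty. If there exists α > 0 with d(·,E)^{-α} ∈ A₁(X,d,μ), then the maximal hole function ρ_{d,E} is doubling: there exists C > 0 with ρ_{d,E}(B_d(x,2r)) ≤ C·ρ_{d,E}(B_d(x,r)) for all x ∈ X, r > 0. -/

import Mathlib

open MeasureTheory ENNReal Set

namespace WPA1

variable {X : Type*}

/-- `d` is a quasi-distance on `X` with triangular constant `K`. -/
def QD (d : X → X → ℝ) (K : ℝ) : Prop :=
  1 ≤ K ∧ (∀ x y, 0 ≤ d x y) ∧ (∀ x y, d x y = 0 ↔ x = y) ∧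
    (∀ x y, d x y = d y x) ∧ ∀ x y z, d x z ≤ K * (d x y + d y z)

/-- The `d`-ball of center `x` and radius `r`. -/
def ball (d : X → X → ℝ) (x : X) (r : ℝ) : Set X := {y | d x y < r}

/-- The optimal (least) triangular constant of `d`. -/
noncomputable def Kopt (d : X → X → ℝ) : ℝ := sInf {K | QD d K}

/-- Distance from a point to a set: `d(x,E) = inf_{e ∈ E} d(x,e)`. -/
noncomputable def distE (d : X → X → ℝ) (E : Set X) (x : X) : ℝ :=
  sInf ((d x) '' E)

/-- The maximal `E`-free hole function
`ρ_{d,E}(B_d(x,r)) = sup {0 < s ≤ 2Kr : ∃ y, B_d(y,s) ⊆ B_d(x,r) \ E}`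
(with value `0` when the set is empty, by `Real.sSup` conventions). -/
noncomputable def hole (d : X → X → ℝ) (K : ℝ) (E : Set X) (x : X) (r : ℝ) : ℝ :=
  sSup {s | 0 < s ∧ s ≤ 2 * K * r ∧ ∃ y, ball d y s ⊆ ball d x r \ E}

/-- The maximal hole function `ρ_{d,E}` is doubling with constant `C`. -/
def HoleDoubling (d : X → X → ℝ) (K : ℝ) (E : Set X) (C : ℝ) : Prop :=
  ∀ x r, 0 < r → hole d K E x (2 * r) ≤ C * hole d K E x r

/-- The `d`-balls are open and form neighborhood bases: the ambient topology is
the one induced by the quasi-distance `d`. -/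
def BallsBasis [TopologicalSpace X] (d : X → X → ℝ) : Prop :=
  (∀ x r, IsOpen (ball d x r)) ∧ ∀ x, ∀ U ∈ nhds x, ∃ r > 0, ball d x r ⊆ U

/-- The measure `μ` is doubling (with constant `A`) on `d`-balls, which have
positive finite measure; i.e. `(X,d,μ)` is a space of homogeneous type. -/
def DoublingBalls [MeasurableSpace X] (μ : Measure X) (d : X → X → ℝ) (A : ℝ) : Prop :=
  ∀ x r, 0 < r → 0 < μ (ball d x r) ∧ μ (ball d x r) < ⊤ ∧
    μ (ball d x (2 * r)) ≤ ENNReal.ofReal A * μ (ball d x r)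

/-- `E` is `(σ,γ)`-weakly porous with respect to `d` and `μ`. -/
def WeaklyPorousWith [MeasurableSpace X] (μ : Measure X) (d : X → X → ℝ) (K : ℝ)
    (E : Set X) (σ γ : ℝ) : Prop :=
  ∀ x r, 0 < r → ∃ (n : ℕ) (c : Fin n → X) (ρ : Fin n → ℝ),
    (∀ i j, i ≠ j → Disjoint (ball d (c i) (ρ i)) (ball d (c j) (ρ j))) ∧
    (∀ i, ball d (c i) (ρ i) ⊆ ball d x r \ E) ∧
    (∀ i, γ * hole d K E x r ≤ ρ i) ∧
    (∀ i, ρ i ≤ 2 * K * r) ∧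
    ENNReal.ofReal σ * μ (ball d x r) ≤ ∑ i, μ (ball d (c i) (ρ i))

/-- `E` is weakly porous with respect to `d` and `μ`. -/
def WeaklyPorous [MeasurableSpace X] (μ : Measure X) (d : X → X → ℝ) (K : ℝ)
    (E : Set X) : Prop :=
  ∃ σ γ : ℝ, σ ∈ Set.Ioo (0:ℝ) 1 ∧ γ ∈ Set.Ioo (0:ℝ) 1 ∧ WeaklyPorousWith μ d K E σ γ

/-- The weight `d(·,E)^{-α}`, valued in `ℝ≥0∞` (so it is `∞` on `{d(·,E)=0}`). -/
noncomputable def wgt (d : X → X → ℝ) (E : Set X) (α : ℝ) (x : X) : ℝ≥0∞ :=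
  ENNReal.ofReal (distE d E x) ^ (-α)

/-- `w` is an `A₁(X,d,μ)`-weight: `w` is locally integrable and the mean value of `w`
over every `d`-ball is bounded by a constant times its essential infimum there. -/
def MemA1 [MeasurableSpace X] (μ : Measure X) (d : X → X → ℝ) (w : X → ℝ≥0∞) : Prop :=
  (∀ x r, 0 < r → ∫⁻ y in ball d x r, w y ∂μ < ⊤) ∧
  ∃ C : ℝ, 0 < C ∧ ∀ x r, 0 < r →
    ∫⁻ y in ball d x r, w y ∂μ ≤
      ENNReal.ofReal C * essInf w (μ.restrict (ball d x r)) * μ (ball d x r)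


set_option maxHeartbeats 2000000 in
/-- If `d(·,E)^{-α} ∈ A₁(X,d,μ)` for some `α > 0`, then `ρ_{d,E}` is doubling. -/
theorem statement11 {X : Type*} [TopologicalSpace X] [MeasurableSpace X] [BorelSpace X]
    (μ : Measure X) (d : X → X → ℝ) (K A : ℝ)
    (hd : QD d K) (hb : BallsBasis d) (hA : DoublingBalls μ d A)
    (E : Set X) (hE : E.Nonempty)
    (α : ℝ) (hα : 0 < α) (hA1 : MemA1 μ d (wgt d E α)) :
    ∃ C : ℝ, 0 < C ∧ HoleDoubling d K E C := by
  obtain ⟨hK, hd0, hdeq, hdsymm, htri⟩ := hd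
  obtain ⟨hfin, C, hC, hA1b⟩ := hA1
  have hK0 : (0:ℝ) < K := lt_of_lt_of_le one_pos hK
  -- A > 0
  obtain ⟨e₀, he₀⟩ := id hE
  have hA0 : (0:ℝ) < A := by
    obtain ⟨h1, h2, h3⟩ := hA e₀ 1 one_pos
    by_contra h
    push_neg at h
    rw [ENNReal.ofReal_eq_zero.mpr h, zero_mul] at h3
    have h4 : 0 < μ (ball d e₀ (2*1)) := by
      refine lt_of_lt_of_le h1 (measure_mono fun u hu => ?_)
      have hu' : d e₀ u < 1 := hu
      show d e₀ u < 2*1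
      linarith
    exact absurd (le_antisymm h3 (zero_le)).symm h4.ne
  set k : ℕ := ⌈4*K⌉₊ with hk
  have h2k : (4*K : ℝ) ≤ 2^k := by
    calc (4*K : ℝ) ≤ (k : ℝ) := Nat.le_ceil _
    _ ≤ 2^k := by
        have := Nat.lt_two_pow_self (n := k)
        calc (k:ℝ) ≤ ((2^k : ℕ) : ℝ) := by exact_mod_cast this.le
        _ = 2^k := by push_cast; ring
  set c₀ : ℝ := 2*C*A^k with hc₀
  have hc₀0 : 0 < c₀ := by positivity
  set β : ℝ := c₀ ^ (-1/α) / (2*K) with hβ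
  have hβ0 : 0 < β := div_pos (Real.rpow_pos_of_pos hc₀0 _) (by linarith)
  refine ⟨max (1/β) (8*K^2), lt_max_of_lt_right (by positivity), ?_⟩
  intro x r hr
  set Cf : ℝ := max (1/β) (8*K^2) with hCf
  have hCf0 : 0 < Cf := lt_max_of_lt_right (by positivity)
  have hρ0 : 0 ≤ hole d K E x r := Real.sSup_nonneg (fun s hs => hs.1.le)
  refine Real.sSup_le ?_ (mul_nonneg hCf0.le hρ0)
  rintro s ⟨hs0, hs2, y, hy⟩
  set r' : ℝ := r/(2*K) with hr'def
  have hr'0 : 0 < r' := div_pos hr (by linarith)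
  set t₀ : ℝ := s/(2*K) with ht₀def
  have ht₀0 : 0 < t₀ := div_pos hs0 (by linarith)
  have ht₀s : 2*K*t₀ = s := by rw [ht₀def]; field_simp [hK0.ne']
  set w := wgt d E α with hw
  have hEne : ((d ·) '' E).Nonempty := hE.image _
  -- distance lower bound inside the hole core
  have hdistlb : ∀ u ∈ ball d y t₀, t₀ ≤ distE d E u := by
    intro u hu
    refine le_csInf (hE.image _) ?_
    rintro b ⟨e, he, rfl⟩
    have h1 : s ≤ d y e := by
      by_contra h
      push_neg at h
      exact (hy h).2 he
    have h2 : d y e ≤ K * (d y u + d u e) := htri y u e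
    have h3 : d y u < t₀ := hu
    nlinarith
  set B2 := ball d x (2*r) with hB2
  set B' := ball d x r' with hB'
  have hsubB' : B' ⊆ B2 := by
    intro u hu
    have : d x u < r' := hu
    have : r' ≤ 2*r := by
      rw [hr'def, div_le_iff₀ (by linarith : (0:ℝ) < 2*K)]
      nlinarith
    exact lt_of_lt_of_le hu this
  have hsub1 : ball d y t₀ ⊆ B2 := by
    intro u hu
    have ht₀le : t₀ ≤ s := by
      rw [ht₀def, div_le_iff₀ (by linarith : (0:ℝ) < 2*K)]
      nlinarith
    exact (hy (lt_of_lt_of_le hu ht₀le)).1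
  -- antitone rpow helper
  have hanti : ∀ a b : ℝ≥0∞, a ≤ b → b^(-α) ≤ a^(-α) := by
    intro a b hab
    rw [ENNReal.rpow_neg, ENNReal.rpow_neg]
    exact ENNReal.inv_le_inv.mpr (ENNReal.rpow_le_rpow hab hα.le)
  -- essInf over B2 is at most (t₀)^{-α}
  have hEss2 : essInf w (μ.restrict B2) ≤ ENNReal.ofReal t₀ ^ (-α) := by
    rw [essInf_eq_sSup]
    refine sSup_le fun a ha => ?_
    by_contra hlt
    push_neg at hlt
    have hsubset : ball d y t₀ ⊆ {z | w z < a} := by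
      intro u hu
      have h1 : ENNReal.ofReal t₀ ≤ ENNReal.ofReal (distE d E u) :=
        ENNReal.ofReal_le_ofReal (hdistlb u hu)
      have h2 : w u ≤ ENNReal.ofReal t₀ ^ (-α) := hanti _ _ h1
      exact lt_of_le_of_lt h2 hlt
    have hpos : 0 < (μ.restrict B2) (ball d y t₀) := by
      rw [Measure.restrict_apply ((hb.1 y t₀).measurableSet)]
      rw [Set.inter_eq_self_of_subset_left hsub1]
      exact (hA y t₀ ht₀0).1
    have := measure_mono_null hsubset ha
    exact absurd this hpos.ne'
  -- doubling iteration
  have hiter : ∀ j : ℕ, μ (ball d x (2^j * r')) ≤ (ENNReal.ofReal A)^j * μ (ball d x r') := by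
    intro j
    induction j with
    | zero => simp
    | succ n ih =>
        have hrn : (0:ℝ) < 2^n * r' := by positivity
        have h1 := (hA x (2^n * r') hrn).2.2
        have h2 : (2:ℝ)^(n+1) * r' = 2 * (2^n * r') := by ring
        rw [h2]
        calc μ (ball d x (2 * (2^n * r'))) ≤ ENNReal.ofReal A * μ (ball d x (2^n * r')) := h1
        _ ≤ ENNReal.ofReal A * ((ENNReal.ofReal A)^n * μ (ball d x r')) :=
            mul_le_mul_right ih _
        _ = (ENNReal.ofReal A)^(n+1) * μ (ball d x r') := by ring
  have hμB2 : μ B2 ≤ (ENNReal.ofReal A)^k * μ B' := by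
    refine le_trans (measure_mono ?_) (hiter k)
    intro u hu
    have h1 : d x u < 2*r := hu
    have h2 : (2*r : ℝ) ≤ 2^k * r' := by
      have h4 : 4*K*r ≤ 2^k * r := mul_le_mul_of_nonneg_right h2k hr.le
      rw [hr'def, ← mul_div_assoc, le_div_iff₀ (by linarith : (0:ℝ) < 2*K)]
      nlinarith
    exact lt_of_lt_of_le h1 h2
  -- main integral chain over B'
  have hμB'0 : 0 < μ B' := (hA x r' hr'0).1
  have hμB'top : μ B' < ⊤ := (hA x r' hr'0).2.1
  have hchain : essInf w (μ.restrict B') * μ B' ≤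
      (ENNReal.ofReal C * ENNReal.ofReal t₀ ^ (-α) * (ENNReal.ofReal A)^k) * μ B' := by
    have h1 : essInf w (μ.restrict B') * μ B' ≤ ∫⁻ z in B', w z ∂μ := by
      have := MeasureTheory.setLIntegral_const (μ := μ) B' (essInf w (μ.restrict B'))
      rw [← this]
      refine lintegral_mono_ae ?_
      exact ae_essInf_le
    have h2 : ∫⁻ z in B', w z ∂μ ≤ ∫⁻ z in B2, w z ∂μ := lintegral_mono_set hsubB'
    have h3 := hA1b x (2*r) (by linarith)
    have h4 : ENNReal.ofReal C * essInf w (μ.restrict B2) * μ B2 ≤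
        ENNReal.ofReal C * ENNReal.ofReal t₀ ^ (-α) * ((ENNReal.ofReal A)^k * μ B') := by
      exact mul_le_mul' (mul_le_mul_right hEss2 _) hμB2
    calc essInf w (μ.restrict B') * μ B' ≤ ∫⁻ z in B', w z ∂μ := h1
    _ ≤ ∫⁻ z in B2, w z ∂μ := h2
    _ ≤ ENNReal.ofReal C * essInf w (μ.restrict B2) * μ B2 := h3
    _ ≤ ENNReal.ofReal C * ENNReal.ofReal t₀ ^ (-α) * ((ENNReal.ofReal A)^k * μ B') := h4
    _ = (ENNReal.ofReal C * ENNReal.ofReal t₀ ^ (-α) * (ENNReal.ofReal A)^k) * μ B' := by ring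
  have hEssB' : essInf w (μ.restrict B') ≤
      ENNReal.ofReal C * ENNReal.ofReal t₀ ^ (-α) * (ENNReal.ofReal A)^k :=
    (ENNReal.mul_le_mul_iff_left hμB'0.ne' hμB'top.ne).mp hchain
  -- rewrite the bound as ofReal of a real number
  set m : ℝ := C * t₀ ^ (-α) * A^k with hm
  have hm0 : 0 < m := by
    have := Real.rpow_pos_of_pos ht₀0 (-α)
    positivity
  have hMeq : ENNReal.ofReal C * ENNReal.ofReal t₀ ^ (-α) * (ENNReal.ofReal A)^k
      = ENNReal.ofReal m := by
    rw [ENNReal.ofReal_rpow_of_pos ht₀0, ← ENNReal.ofReal_pow hA0.le,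
      ← ENNReal.ofReal_mul hC.le, ← ENNReal.ofReal_mul (by positivity)]
  rw [hMeq] at hEssB'
  -- find a good point z in B'
  have hzex : ∃ z ∈ B', w z < ENNReal.ofReal (2*m) := by
    by_contra h
    push_neg at h
    have hnull : (μ.restrict B') {z | w z < ENNReal.ofReal (2*m)} = 0 := by
      have hsub : {z | w z < ENNReal.ofReal (2*m)} ∩ B' = ∅ := by
        ext u
        simp only [Set.mem_inter_iff, Set.mem_setOf_eq, Set.mem_empty_iff_false, iff_false,
          not_and]
        intro hu hu'
        exact absurd hu (not_lt.mpr (h u hu'))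
      rw [Measure.restrict_apply' ((hb.1 x r').measurableSet), hsub, measure_empty]
    have hge : ENNReal.ofReal (2*m) ≤ essInf w (μ.restrict B') := by
      refine le_essInf_of_ae_le _ ?_
      rw [Filter.EventuallyLE, MeasureTheory.ae_iff]
      refine measure_mono_null ?_ hnull
      intro u hu
      simp only [Set.mem_setOf_eq, not_le] at hu ⊢
      exact hu
    have : ENNReal.ofReal (2*m) ≤ ENNReal.ofReal m := le_trans hge hEssB'
    rw [ENNReal.ofReal_le_ofReal_iff hm0.le] at this
    linarith
  obtain ⟨z, hzB', hzw⟩ := hzex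
  -- deduce a distance lower bound at z
  have hD : β * s < distE d E z := by
    set D := distE d E z with hD
    have hD0 : 0 ≤ D := Real.sInf_nonneg (by rintro b ⟨e, _, rfl⟩; exact hd0 z e)
    rcases eq_or_lt_of_le hD0 with hDeq | hDpos
    · exfalso
      have : w z = ⊤ := by
        rw [hw]
        show ENNReal.ofReal (distE d E z) ^ (-α) = ⊤
        rw [← hD, ← hDeq, ENNReal.ofReal_zero]
        exact ENNReal.zero_rpow_of_neg (by linarith)
      rw [this] at hzw
      exact absurd hzw (not_lt.mpr le_top)
    · have hwz : ENNReal.ofReal (D ^ (-α)) < ENNReal.ofReal (2*m) := by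
        rw [← ENNReal.ofReal_rpow_of_pos hDpos]
        exact hzw
      rw [ENNReal.ofReal_lt_ofReal_iff_of_nonneg (Real.rpow_nonneg hD0 _)] at hwz
      -- 2*m = c₀ * t₀^{-α}
      have hmm : 2*m = c₀ * t₀ ^ (-α) := by rw [hm, hc₀]; ring
      have hβs : β * s = c₀ ^ (-1/α) * t₀ := by
        rw [hβ, ht₀def]; field_simp
      have hβs0 : 0 < β * s := mul_pos hβ0 hs0
      have hexp : (-1/α) * (-α) = 1 := by field_simp
      have hc1 : (c₀ ^ (-1/α)) ^ (-α) = c₀ := by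
        rw [← Real.rpow_mul hc₀0.le, hexp, Real.rpow_one]
      have hkey : (β*s) ^ (-α) = c₀ * t₀ ^ (-α) := by
        rw [hβs, Real.mul_rpow (Real.rpow_nonneg hc₀0.le _) ht₀0.le, hc1]
      rw [hmm, ← hkey] at hwz
      -- now D^{-α} < (β*s)^{-α} implies β*s < D
      rw [Real.rpow_neg hD0, Real.rpow_neg hβs0.le] at hwz
      have h1 : (β*s) ^ α < D ^ α := by
        have hp1 : 0 < D ^ α := Real.rpow_pos_of_pos hDpos _
        have hp2 : 0 < (β*s) ^ α := Real.rpow_pos_of_pos hβs0 _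
        exact (inv_lt_inv₀ hp1 hp2).mp hwz
      exact (Real.rpow_lt_rpow_iff hβs0.le hD0 hα).mp h1
  -- produce a hole of B(x,r)
  set t : ℝ := min (β*s) r' with ht
  have ht0 : 0 < t := lt_min (mul_pos hβ0 hs0) hr'0
  have htmem : t ∈ {u | 0 < u ∧ u ≤ 2*K*r ∧ ∃ y', ball d y' u ⊆ ball d x r \ E} := by
    refine ⟨ht0, ?_, z, ?_⟩
    · have h1 : t ≤ r' := min_le_right _ _
      have h2 : r' ≤ 2*K*r := by
        rw [hr'def, div_le_iff₀ (by linarith : (0:ℝ) < 2*K)]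
        nlinarith
      linarith
    · intro u hu
      have hzu : d z u < t := hu
      have hxz : d x z < r' := hzB'
      constructor
      · show d x u < r
        have h1 : d x u ≤ K * (d x z + d z u) := htri x z u
        have h2 : d z u < r' := lt_of_lt_of_le hzu (min_le_right _ _)
        have h3 : K * (r' + r') = r := by
          rw [hr'def]; field_simp; ring
        nlinarith
      · intro huE
        have h1 : distE d E z ≤ d z u :=
          csInf_le ⟨0, by rintro b ⟨e, _, rfl⟩; exact hd0 z e⟩
            (Set.mem_image_of_mem _ huE)
        have h2 : d z u < β * s := lt_of_lt_of_le hzu (min_le_left _ _)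
        linarith
  have hbdd : BddAbove {u | 0 < u ∧ u ≤ 2*K*r ∧ ∃ y', ball d y' u ⊆ ball d x r \ E} :=
    ⟨2*K*r, fun u hu => hu.2.1⟩
  have hle : t ≤ hole d K E x r := le_csSup hbdd htmem
  -- conclude
  rcases le_total (β*s) r' with hc | hc
  · have h1 : β * s ≤ hole d K E x r := by
      rw [ht, min_eq_left hc] at hle; exact hle
    calc s = (1/β) * (β*s) := by field_simp
    _ ≤ (1/β) * hole d K E x r := by
        refine mul_le_mul_of_nonneg_left h1 (by positivity)
    _ ≤ Cf * hole d K E x r := by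
        refine mul_le_mul_of_nonneg_right (le_max_left _ _) (le_trans ht0.le hle)
  · have h1 : r' ≤ hole d K E x r := by
      rw [ht, min_eq_right hc] at hle; exact hle
    have h2 : s ≤ 8*K^2 * r' := by
      rw [hr'def]
      have : 8*K^2 * (r/(2*K)) = 4*K*r := by field_simp; ring
      rw [this]
      nlinarith
    calc s ≤ 8*K^2 * r' := h2
    _ ≤ 8*K^2 * hole d K E x r := mul_le_mul_of_nonneg_left h1 (by positivity)
    _ ≤ Cf * hole d K E x r := by
        exact mul_le_mul_of_nonneg_right (le_max_right _ _) hρ0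
  

end WPA1
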